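/- For any two permutations π, ν of {1,…,n} with n ≥ 2, the block transposition distance satisfies d(π,ν) ≤ n−1; that is, ν can always be obtained from π by composing with at most n−1 block transpositions. -/

import Mathlib

/-- `π` is the block transposition `σ(i,j,k)` on `{1,…,n}` (positions/values written
1-based; the underlying type is `Fin n`, so position `t : Fin n` stands for `t+1`). -/
def IsBlockTranspositionOf (n i j k : ℕ) (π : Equiv.Perm (Fin n)) : Prop :=
  i < j ∧ j < k ∧ k ≤ n ∧
  ∀ t : Fin n,
    (π t : ℕ) + 1 =
      if t.val + 1 ≤ i ∨ k < t.val + 1 then t.val + 1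
      else if t.val + 1 ≤ k - j + i then t.val + 1 + (j - i)
      else t.val + 1 - (k - j)

/-- `π` is a block transposition of `Sym_n`. -/
def IsBlockTransposition (n : ℕ) (π : Equiv.Perm (Fin n)) : Prop :=
  ∃ i j k : ℕ, IsBlockTranspositionOf n i j k π

/-- the block transposition distance `d(π,ν)`: the least `m` such that
`ν = π ∘ σ₁ ∘ ⋯ ∘ σ_m` with each `σ_i` a block transposition. -/
noncomputable def btDist (n : ℕ) (π ν : Equiv.Perm (Fin n)) : ℕ :=
  sInf {m | ∃ l : List (Equiv.Perm (Fin n)),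
    l.length = m ∧ (∀ σ ∈ l, IsBlockTransposition n σ) ∧ ν = π * l.prod}

/-- `[0 π]` : the permutation of `{0,…,n}` fixing `0` and agreeing with `π` on `{1,…,n}`. -/
def zeroExtend {n : ℕ} (π : Equiv.Perm (Fin n)) : Equiv.Perm (Fin (n + 1)) :=
  Equiv.Perm.decomposeFin.symm (0, π)

/-- the value of the sequence `0 π₁ ⋯ π_n` (positions taken mod `n+1`, `π₀ := 0`). -/
def seqVal (n : ℕ) (π : Equiv.Perm (Fin n)) (x : ℕ) : ℕ :=
  if h : x % (n + 1) = 0 then 0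
  else (π ⟨x % (n + 1) - 1, by
    have h2 : x % (n + 1) < n + 1 := Nat.mod_lt _ (Nat.succ_pos n)
    omega⟩ : Fin n).val + 1

/-- `π` and `π'` are torically equivalent: `π'_x ≡ π_{x+r} − π_r (mod n+1)`. -/
def ToricEquiv (n : ℕ) (π π' : Equiv.Perm (Fin n)) : Prop :=
  ∃ r ≤ n, ∀ x : ℕ, 1 ≤ x → x ≤ n →
    seqVal n π' x ≡ seqVal n π (x + r) + (n + 1) - seqVal n π r [MOD n + 1]

/-- `ϖ` is the image of `π` under the toric map `Ω_r`. -/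
def IsToricImage (n r : ℕ) (π ϖ : Equiv.Perm (Fin n)) : Prop :=
  ∀ x : ℕ, 1 ≤ x → x ≤ n →
    seqVal n ϖ x ≡ seqVal n π (x + r) + (n + 1) - seqVal n π r [MOD n + 1]

/-- the value at place `x` of the sequence `0 π₁ ⋯ π_n (n+1)`. -/
def extSeq (n : ℕ) (π : Equiv.Perm (Fin n)) (x : ℕ) : ℕ :=
  if hx : 1 ≤ x ∧ x ≤ n then (π ⟨x - 1, by omega⟩ : Fin n).val + 1
  else if x = 0 then 0 else n + 1

/-- the number of bonds of `π`, i.e. of adjacent pairs `x, x+1` in the sequence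
`0 π₁ ⋯ π_n (n+1)`. -/
def bondCount (n : ℕ) (π : Equiv.Perm (Fin n)) : ℕ :=
  ((Finset.range (n + 1)).filter fun t => extSeq n π (t + 1) = extSeq n π t + 1).card

/-- `σ` is a block transposition `σ̄(i,j,k)`, `−1 ≤ i < j < k ≤ n`, of `{0,1,…,n}`. -/
def IsBlockTransposition0 (n : ℕ) (σ : Equiv.Perm (Fin (n + 1))) : Prop :=
  ∃ i j k : ℤ, -1 ≤ i ∧ i < j ∧ j < k ∧ k ≤ (n : ℤ) ∧
    ∀ t : Fin (n + 1),
      ((σ t : ℕ) : ℤ) =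
        if ((t : ℕ) : ℤ) ≤ i ∨ k < ((t : ℕ) : ℤ) then ((t : ℕ) : ℤ)
        else if ((t : ℕ) : ℤ) ≤ k - j + i then ((t : ℕ) : ℤ) + (j - i)
        else ((t : ℕ) : ℤ) - (k - j)

/-- the number of bonds of a permutation `π̄` of `{0,…,n}`: indices `t`, `0 ≤ t < n`,
with `π̄_{t+1} ≡ π̄_t + 1 (mod n+1)`. -/
def bondCount0 (n : ℕ) (π : Equiv.Perm (Fin (n + 1))) : ℕ :=
  (Finset.univ.filter fun t : Fin n =>
    (π t.succ : Fin (n + 1)).val = ((π t.castSucc : Fin (n + 1)).val + 1) % (n + 1)).card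

/-- 0-based cyclic-shift function: the cycle `(a a+1 ⋯ b)` sending `b ↦ a` and
`s ↦ s+1` for `a ≤ s < b`. -/
def cycG (a b s : ℕ) : ℕ :=
  if s < a ∨ b < s then s else if s = b then a else s + 1

def cycGinv (a b s : ℕ) : ℕ :=
  if s < a ∨ b < s then s else if s = a then b else s - 1

lemma cycG_lt {n a b : ℕ} (hab : a ≤ b) (hb : b < n) (s : ℕ) (hs : s < n) :
    cycG a b s < n := by
  unfold cycG; split_ifs <;> omega

lemma cycGinv_lt {n a b : ℕ} (hab : a ≤ b) (hb : b < n) (s : ℕ) (hs : s < n) :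
    cycGinv a b s < n := by
  unfold cycGinv; split_ifs <;> omega

lemma cycGinv_cycG {a b : ℕ} (hab : a ≤ b) (s : ℕ) :
    cycGinv a b (cycG a b s) = s := by
  unfold cycG cycGinv; split_ifs <;> omega

lemma cycG_cycGinv {a b : ℕ} (hab : a ≤ b) (s : ℕ) :
    cycG a b (cycGinv a b s) = s := by
  unfold cycG cycGinv; split_ifs <;> omega

/-- the cyclic shift as a permutation of `Fin n`. -/
def cycPerm (n a b : ℕ) (hab : a ≤ b) (hb : b < n) : Equiv.Perm (Fin n) where
  toFun s := ⟨cycG a b s.val, cycG_lt hab hb s.val s.isLt⟩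
  invFun s := ⟨cycGinv a b s.val, cycGinv_lt hab hb s.val s.isLt⟩
  left_inv s := by apply Fin.ext; simp [cycGinv_cycG hab]
  right_inv s := by apply Fin.ext; simp [cycG_cycGinv hab]

lemma cycPerm_isBT (n a b : ℕ) (hab : a < b) (hb : b < n) :
    IsBlockTransposition n (cycPerm n a b hab.le hb) := by
  refine ⟨a, a + 1, b + 1, by omega, by omega, by omega, ?_⟩
  intro t
  show cycG a b t.val + 1 = _
  unfold cycG
  split_ifs <;> omega

lemma cycPerm_fix {n a b : ℕ} (hab : a ≤ b) (hb : b < n) (x : Fin n)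
    (hx : b < x.val) : cycPerm n a b hab hb x = x := by
  apply Fin.ext
  show cycG a b x.val = x.val
  unfold cycG; split_ifs <;> omega

lemma cycPerm_top {n a b : ℕ} (hab : a ≤ b) (hb : b < n) :
    cycPerm n a b hab hb ⟨b, hb⟩ = ⟨a, lt_of_le_of_lt hab hb⟩ := by
  apply Fin.ext
  show cycG a b b = a
  unfold cycG; split_ifs <;> omega

/-- Key lemma: a permutation fixing all points with value `≥ m` is a product of at
most `m - 1` block transpositions. -/
lemma key_decomp (n : ℕ) : ∀ m : ℕ, ∀ τ : Equiv.Perm (Fin n),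
    (∀ x : Fin n, m ≤ x.val → τ x = x) →
    ∃ l : List (Equiv.Perm (Fin n)), l.length ≤ m - 1 ∧
      (∀ σ ∈ l, IsBlockTransposition n σ) ∧ l.prod = τ := by
  intro m
  induction m with
  | zero =>
    intro τ hτ
    refine ⟨[], by simp, by simp, ?_⟩
    simp only [List.prod_nil]
    ext x
    simp only [Equiv.Perm.coe_one, id_eq]
    exact congrArg Fin.val (hτ x (Nat.zero_le _)).symm
  | succ m ih =>
    intro τ hτ
    by_cases hm : m < n
    · set p : Fin n := ⟨m, hm⟩ with hp
      have hvle : (τ p).val ≤ m := by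
        by_contra hgt
        push_neg at hgt
        have h1 : τ (τ p) = τ p := hτ (τ p) hgt
        have h2 : τ p = p := τ.injective h1
        rw [h2] at hgt
        simp [hp] at hgt
      by_cases hvp : τ p = p
      · -- τ already fixes m as well
        have hτ' : ∀ x : Fin n, m ≤ x.val → τ x = x := by
          intro x hx
          rcases Nat.eq_or_lt_of_le hx with h | h
          · have : x = p := Fin.ext h.symm
            rw [this]; exact hvp
          · exact hτ x h
        obtain ⟨l, hl1, hl2, hl3⟩ := ih τ hτ'
        exact ⟨l, by omega, hl2, hl3⟩
      · have hvlt : (τ p).val < m := by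
          rcases Nat.eq_or_lt_of_le hvle with h | h
          · exact absurd (Fin.ext h : τ p = p) hvp
          · exact h
        set a := (τ p).val with ha
        set σ := cycPerm n a m (by omega) hm with hσ
        have hσp : σ p = τ p := by
          have h := cycPerm_top (show a ≤ m by omega) hm
          apply Fin.ext
          show ((cycPerm n a m (by omega) hm) (⟨m, hm⟩ : Fin n)).val = _
          rw [h]
        set τ' := σ⁻¹ * τ with hτ'def
        have hτ'fix : ∀ x : Fin n, m ≤ x.val → τ' x = x := by
          intro x hx
          rcases Nat.eq_or_lt_of_le hx with h | h
          · have hxp : x = p := Fin.ext h.symm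
            rw [hxp, hτ'def, Equiv.Perm.mul_apply, ← hσp]
            exact σ.symm_apply_apply p
          · have h1 : τ x = x := hτ x h
            have h2 : σ x = x := cycPerm_fix _ _ x (by omega)
            rw [hτ'def, Equiv.Perm.mul_apply, h1]
            exact σ.injective (by rw [← Equiv.Perm.mul_apply, mul_inv_cancel, Equiv.Perm.one_apply, h2])
        obtain ⟨l, hl1, hl2, hl3⟩ := ih τ' hτ'fix
        refine ⟨σ :: l, ?_, ?_, ?_⟩
        · simp only [List.length_cons]; omega
        · intro x hx
          rcases List.mem_cons.mp hx with h | h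
          · rw [h, hσ]; exact cycPerm_isBT n a m hvlt hm
          · exact hl2 x h
        · rw [List.prod_cons, hl3, hτ'def]
          group
    · -- m ≥ n : hypothesis for m is vacuous too
      have hτ' : ∀ x : Fin n, m ≤ x.val → τ x = x := by
        intro x hx
        exact hτ x (by omega)
      obtain ⟨l, hl1, hl2, hl3⟩ := ih τ hτ'
      exact ⟨l, by omega, hl2, hl3⟩

/-- for `n ≥ 2`, any two permutations of `{1,…,n}` are at block
transposition distance at most `n − 1`. -/
theorem btDist_le (n : ℕ) (hn : 2 ≤ n) (π ν : Equiv.Perm (Fin n)) :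
    btDist n π ν ≤ n - 1 := by
  obtain ⟨l, hl1, hl2, hl3⟩ := key_decomp n n (π⁻¹ * ν) (fun x hx => absurd x.isLt (by omega))
  have hmem : l.length ∈ {m | ∃ l' : List (Equiv.Perm (Fin n)),
      l'.length = m ∧ (∀ σ ∈ l', IsBlockTransposition n σ) ∧ ν = π * l'.prod} := by
    exact ⟨l, rfl, hl2, by rw [hl3]; group⟩
  exact le_trans (Nat.sInf_le hmem) hl1
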